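/- Let δ be a real number with 0 ≤ δ ≤ 1/4 and let α, β ∈ [0,1] satisfy β·(1−α) + α·(1−β) ≤ δ. Then either both α ≤ 2δ and β ≤ 2δ, or both α ≥ 1−2δ and β ≥ 1−2δ. (As the penalty forces the independent-marginals PIU value toward zero, the pair of marginal probabilities is forced toward (0,0) or (1,1), which is the basis of the individual-level fairness guarantee.) -/
import Mathlib

theorem marginals_forced_to_corners
    (δ α β : ℝ) (hδ0 : 0 ≤ δ) (hδ : δ ≤ 1 / 4)
    (hα0 : 0 ≤ α) (hα1 : α ≤ 1) (hβ0 : 0 ≤ β) (hβ1 : β ≤ 1)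
    (hpen : β * (1 - α) + α * (1 - β) ≤ δ) :
    (α ≤ 2 * δ ∧ β ≤ 2 * δ) ∨ (1 - 2 * δ ≤ α ∧ 1 - 2 * δ ≤ β) := by
  rcases le_or_gt α (1/2) with h | h
  · left
    constructor <;> nlinarith
  · right
    constructor <;> nlinarith
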